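/- For $\mu \in (-1,1)$ and $\rho \in (0,1)$, let $H$ denote the binary entropy function $H(p) = -p\log_2 p - (1-p)\log_2(1-p)$, and for $K \geq 1$ define $M_K(\rho) = K H\big(\frac{K}{K+1}\big) - \frac{K}{2} H\big(\frac{K+\rho}{K+1}\big) - \frac{K}{2} H\big(\frac{K-\rho}{K+1}\big)$. Then for all real $K \geq 1$ and $\rho \in (0,1)$, $M_K(\rho) \leq M_1(\rho) = 1 - H\big(\frac{1+\rho}{2}\big)$. -/

import Mathlib

open Real Set

/-- The binary entropy function (base 2). -/
noncomputable def binEnt (p : ℝ) : ℝ := -p * Real.logb 2 p - (1 - p) * Real.logb 2 (1 - p)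

/-- The function `M_K(ρ)`. -/
noncomputable def MK (K ρ : ℝ) : ℝ :=
  K * binEnt (K / (K + 1)) - K / 2 * binEnt ((K + ρ) / (K + 1))
    - K / 2 * binEnt ((K - ρ) / (K + 1))

noncomputable def phi (x : ℝ) : ℝ := ((1+x) * Real.log (1+x) + (1-x) * Real.log (1-x)) / 2

lemma hd_log1p {x : ℝ} (h : (1:ℝ)+x ≠ 0) :
    HasDerivAt (fun y : ℝ => Real.log (1+y)) (1/(1+x)) x := by
  have h1 : HasDerivAt (fun y : ℝ => 1+y) 1 x := (hasDerivAt_id x).const_add 1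
  simpa using h1.log h

lemma hd_log1m {x : ℝ} (h : (1:ℝ)-x ≠ 0) :
    HasDerivAt (fun y : ℝ => Real.log (1-y)) (-(1/(1-x))) x := by
  have h1 : HasDerivAt (fun y : ℝ => 1-y) (-1) x := (hasDerivAt_id x).const_sub 1
  have := h1.log h
  convert this using 1
  field_simp

-- Lemma A: log(1+x) - log(1-x) ≤ 2x/(1-x^2) on [0,1)
lemma lemA : ∀ x ∈ Ico (0:ℝ) 1, Real.log (1+x) - Real.log (1-x) ≤ 2*x/(1-x^2) := by
  set f : ℝ → ℝ := fun x => 2*x/(1-x^2) - (Real.log (1+x) - Real.log (1-x)) with hf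
  have key : ∀ x ∈ Ico (0:ℝ) 1, 0 ≤ f x := by
    have mono : MonotoneOn f (Ico (0:ℝ) 1) := by
      apply monotoneOn_of_hasDerivWithinAt_nonneg (convex_Ico 0 1)
        (f' := fun x => 2*(1+x^2)/(1-x^2)^2 - 2/(1-x^2))
      · apply ContinuousOn.sub
        · apply ContinuousOn.div (by fun_prop)
          · fun_prop
          · intro x hx
            simp only [mem_Ico] at hx
            nlinarith [hx.1, hx.2]
        · apply ContinuousOn.sub
          · apply Real.continuousOn_log.comp (by fun_prop)
            intro x hx
            simp only [mem_Ico] at hx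
            intro h; simp only [mem_singleton_iff] at h; nlinarith
          · apply Real.continuousOn_log.comp (by fun_prop)
            intro x hx
            simp only [mem_Ico] at hx
            intro h; simp only [mem_singleton_iff] at h; nlinarith
      · rw [interior_Ico]
        intro x hx
        simp only [mem_Ioo] at hx
        have h1 : (1:ℝ)+x ≠ 0 := by nlinarith
        have h2 : (1:ℝ)-x ≠ 0 := by nlinarith
        have h3 : (1:ℝ)-x^2 ≠ 0 := by nlinarith
        have hda : HasDerivAt f (2*(1+x^2)/(1-x^2)^2 - 2/(1-x^2)) x := by
          have hq : HasDerivAt (fun y : ℝ => 2*y/(1-y^2)) (2*(1+x^2)/(1-x^2)^2) x := by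
            have hn : HasDerivAt (fun y : ℝ => 2*y) 2 x := by
              simpa using (hasDerivAt_id x).const_mul 2
            have hdd : HasDerivAt (fun y : ℝ => 1-y^2) (-(2*x)) x := by
              simpa using ((hasDerivAt_pow 2 x).const_sub 1)
            have := hn.div hdd h3
            refine this.congr_deriv (Eq.symm ?_)
            field_simp
            ring
          have hl : HasDerivAt (fun y : ℝ => Real.log (1+y) - Real.log (1-y)) (2/(1-x^2)) x := by
            have := (hd_log1p h1).sub (hd_log1m h2)
            refine this.congr_deriv (Eq.symm ?_)
            field_simp
            ring
          exact hq.sub hl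
        exact hda.hasDerivWithinAt
      · rw [interior_Ico]
        intro x hx
        simp only [mem_Ioo] at hx
        have hx1 : (0:ℝ) < 1 - x^2 := by nlinarith [hx.1, hx.2]
        rw [sub_nonneg, div_le_div_iff₀ hx1 (by positivity)]
        nlinarith [sq_nonneg x, sq_nonneg (x^2)]
    intro x hx
    have := mono (by simp : (0:ℝ) ∈ Ico (0:ℝ) 1) hx hx.1
    simpa [hf] using this
  intro x hx
  have := key x hx
  simp only [hf, sub_nonneg] at this
  linarith

-- Lemma B: (2+x)log(1+x)+(2-x)log(1-x) ≤ 0 on [0,1)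
lemma lemB : ∀ x ∈ Ico (0:ℝ) 1, (2+x) * Real.log (1+x) + (2-x) * Real.log (1-x) ≤ 0 := by
  set h : ℝ → ℝ := fun x => (2+x) * Real.log (1+x) + (2-x) * Real.log (1-x) with hh
  have anti : AntitoneOn h (Ico (0:ℝ) 1) := by
    apply antitoneOn_of_hasDerivWithinAt_nonpos (convex_Ico 0 1)
      (f' := fun x => (Real.log (1+x) - Real.log (1-x)) - 2*x/(1-x^2))
    · apply ContinuousOn.add
      · apply ContinuousOn.mul (by fun_prop)
        apply Real.continuousOn_log.comp (by fun_prop)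
        intro x hx
        simp only [mem_Ico] at hx
        intro hc; simp only [mem_singleton_iff] at hc; nlinarith
      · apply ContinuousOn.mul (by fun_prop)
        apply Real.continuousOn_log.comp (by fun_prop)
        intro x hx
        simp only [mem_Ico] at hx
        intro hc; simp only [mem_singleton_iff] at hc; nlinarith
    · rw [interior_Ico]
      intro x hx
      simp only [mem_Ioo] at hx
      have h1 : (1:ℝ)+x ≠ 0 := by nlinarith
      have h2 : (1:ℝ)-x ≠ 0 := by nlinarith
      have h3 : (1:ℝ)-x^2 ≠ 0 := by nlinarith
      have hda : HasDerivAt h ((Real.log (1+x) - Real.log (1-x)) - 2*x/(1-x^2)) x := by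
        have t1 : HasDerivAt (fun y : ℝ => (2+y) * Real.log (1+y))
            (Real.log (1+x) + (2+x)/(1+x)) x := by
          have := ((hasDerivAt_id x).const_add 2).mul (hd_log1p h1)
          refine this.congr_deriv (Eq.symm ?_)
          simp only [id]
          field_simp
          try ring
        have t2 : HasDerivAt (fun y : ℝ => (2-y) * Real.log (1-y))
            (-Real.log (1-x) - (2-x)/(1-x)) x := by
          have := ((hasDerivAt_id x).const_sub 2).mul (hd_log1m h2)
          refine this.congr_deriv (Eq.symm ?_)
          simp only [id]
          field_simp
          try ring
        have := t1.add t2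
        refine this.congr_deriv (Eq.symm ?_)
        have e : (2+x)/(1+x) - (2-x)/(1-x) = -(2*x/(1-x^2)) := by
          rw [div_sub_div _ _ h1 h2, neg_div', div_eq_div_iff (by nlinarith) h3]
          ring
        linarith [e]
      exact hda.hasDerivWithinAt
    · rw [interior_Ico]
      intro x hx
      have := lemA x (Ioo_subset_Ico_self hx)
      linarith
  intro x hx
  have := anti (by simp : (0:ℝ) ∈ Ico (0:ℝ) 1) hx hx.1
  simpa [hh] using this

lemma hd_phi {x : ℝ} (h1 : (1:ℝ)+x ≠ 0) (h2 : (1:ℝ)-x ≠ 0) :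
    HasDerivAt phi ((Real.log (1+x) - Real.log (1-x))/2) x := by
  have t1 : HasDerivAt (fun y : ℝ => (1+y) * Real.log (1+y)) (Real.log (1+x) + 1) x := by
    have := ((hasDerivAt_id x).const_add 1).mul (hd_log1p h1)
    refine this.congr_deriv (Eq.symm ?_)
    simp only [id]
    field_simp
  have t2 : HasDerivAt (fun y : ℝ => (1-y) * Real.log (1-y)) (-Real.log (1-x) - 1) x := by
    have := ((hasDerivAt_id x).const_sub 1).mul (hd_log1m h2)
    refine this.congr_deriv (Eq.symm ?_)
    simp only [id]
    field_simp
    ring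
  have := (t1.add t2).div_const 2
  refine this.congr_deriv (Eq.symm ?_)
  ring

lemma lemD : MonotoneOn (fun x => phi x / x^2) (Ioo (0:ℝ) 1) := by
  apply monotoneOn_of_hasDerivWithinAt_nonneg (convex_Ioo 0 1)
    (f' := fun x => ((Real.log (1+x) - Real.log (1-x))/2 * x^2 - phi x * (2*x)) / (x^2)^2)
  · apply ContinuousOn.div
    · unfold phi
      apply ContinuousOn.div_const
      apply ContinuousOn.add
      · apply ContinuousOn.mul (by fun_prop)
        apply Real.continuousOn_log.comp (by fun_prop)
        intro x hx
        simp only [mem_Ioo] at hx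
        intro hc; simp only [mem_singleton_iff] at hc; nlinarith
      · apply ContinuousOn.mul (by fun_prop)
        apply Real.continuousOn_log.comp (by fun_prop)
        intro x hx
        simp only [mem_Ioo] at hx
        intro hc; simp only [mem_singleton_iff] at hc; nlinarith
    · fun_prop
    · intro x hx
      simp only [mem_Ioo] at hx
      exact pow_ne_zero 2 (ne_of_gt hx.1)
  · rw [interior_Ioo]
    intro x hx
    simp only [mem_Ioo] at hx
    have h1 : (1:ℝ)+x ≠ 0 := by nlinarith
    have h2 : (1:ℝ)-x ≠ 0 := by nlinarith
    have hx2 : x^2 ≠ 0 := pow_ne_zero 2 (ne_of_gt hx.1)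
    exact ((hd_phi h1 h2).div (hasDerivAt_pow 2 x |>.congr_deriv (by ring)) hx2).hasDerivWithinAt
  · rw [interior_Ioo]
    intro x hx
    simp only [mem_Ioo] at hx
    have hB := lemB x (Ioo_subset_Ico_self hx)
    have hnum : 0 ≤ (Real.log (1+x) - Real.log (1-x))/2 * x^2 - phi x * (2*x) := by
      have : (Real.log (1+x) - Real.log (1-x))/2 * x^2 - phi x * (2*x)
          = x * (-(1/2) * ((2+x) * Real.log (1+x) + (2-x) * Real.log (1-x))) := by
        unfold phi
        ring
      rw [this]
      have h4 : 0 ≤ -(1/2) * ((2+x) * Real.log (1+x) + (2-x) * Real.log (1-x)) := by linarith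
      exact mul_nonneg (le_of_lt hx.1) h4
    exact div_nonneg hnum (by positivity)

lemma key (K ρ : ℝ) (hK : 1 ≤ K) (hρ : ρ ∈ Set.Ioo (0:ℝ) 1) :
    K^2 * phi (ρ/K) ≤ phi ρ := by
  obtain ⟨hρ0, hρ1⟩ := hρ
  have hK0 : (0:ℝ) < K := by linarith
  have hu : ρ/K ∈ Ioo (0:ℝ) 1 := by
    constructor
    · positivity
    · calc ρ/K ≤ ρ/1 := by apply div_le_div_of_nonneg_left (le_of_lt hρ0) one_pos hK
        <;> linarith
      _ < 1 := by linarith [div_one ρ ▸ hρ1]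
  have hle : ρ/K ≤ ρ := by
    calc ρ/K ≤ ρ/1 := div_le_div_of_nonneg_left (le_of_lt hρ0) one_pos hK
      _ = ρ := div_one ρ
  have := lemD hu ⟨hρ0, hρ1⟩ hle
  dsimp only at this
  have he : phi (ρ/K) / (ρ/K)^2 = K^2 * phi (ρ/K) / ρ^2 := by
    rw [div_pow]
    field_simp
  rw [he] at this
  have hρ2 : (0:ℝ) < ρ^2 := by positivity
  calc K^2 * phi (ρ/K) = K^2 * phi (ρ/K) / ρ^2 * ρ^2 := by field_simp
    _ ≤ phi ρ / ρ^2 * ρ^2 := by apply mul_le_mul_of_nonneg_right this (le_of_lt hρ2)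
    _ = phi ρ := by field_simp

lemma MK_eq (K ρ : ℝ) (hK : 1 ≤ K) (hρ : ρ ∈ Set.Ioo (0:ℝ) 1) :
    MK K ρ = K * (K * phi (ρ/K) + phi ρ) / ((K+1) * Real.log 2) := by
  obtain ⟨hρ0, hρ1⟩ := hρ
  have hK0 : (0:ℝ) < K := by linarith
  have ha : (0:ℝ) < K+1 := by linarith
  have hKp : (0:ℝ) < K+ρ := by linarith
  have hKm : (0:ℝ) < K-ρ := by linarith
  have h1p : (0:ℝ) < 1+ρ := by linarith
  have h1m : (0:ℝ) < 1-ρ := by linarith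
  have hl2 : Real.log 2 ≠ 0 := ne_of_gt (Real.log_pos one_lt_two)
  have e1 : (1:ℝ) - K/(K+1) = 1/(K+1) := by field_simp; ring
  have e2 : (1:ℝ) - (K+ρ)/(K+1) = (1-ρ)/(K+1) := by field_simp; try ring
  have e3 : (1:ℝ) - (K-ρ)/(K+1) = (1+ρ)/(K+1) := by field_simp; try ring
  have e4 : (1:ℝ) + ρ/K = (K+ρ)/K := by field_simp; try ring
  have e5 : (1:ℝ) - ρ/K = (K-ρ)/K := by field_simp
  unfold MK binEnt phi
  rw [e1, e2, e3, e4, e5]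
  rw [Real.log_div hKp.ne' hK0.ne', Real.log_div hKm.ne' hK0.ne']
  simp only [Real.logb, Real.log_div hK0.ne' ha.ne', Real.log_div one_ne_zero ha.ne',
    Real.log_div hKp.ne' ha.ne', Real.log_div hKm.ne' ha.ne',
    Real.log_div h1p.ne' ha.ne', Real.log_div h1m.ne' ha.ne', Real.log_one]
  field_simp
  ring

theorem stmt_14 (K ρ : ℝ) (hK : 1 ≤ K) (hρ : ρ ∈ Set.Ioo (0 : ℝ) 1) :
    MK K ρ ≤ MK 1 ρ ∧ MK 1 ρ = 1 - binEnt ((1 + ρ) / 2) := by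
  obtain ⟨hρ0, hρ1⟩ := hρ
  have hl2 : (0:ℝ) < Real.log 2 := Real.log_pos one_lt_two
  have h1p : (0:ℝ) < 1+ρ := by linarith
  have h1m : (0:ℝ) < 1-ρ := by linarith
  have hM1 : MK 1 ρ = phi ρ / Real.log 2 := by
    rw [MK_eq 1 ρ le_rfl ⟨hρ0, hρ1⟩]
    rw [div_one]
    ring
  constructor
  · rw [MK_eq K ρ hK ⟨hρ0, hρ1⟩, hM1]
    rw [div_le_div_iff₀ (by positivity) hl2]
    have hkey := key K ρ hK ⟨hρ0, hρ1⟩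
    nlinarith [hkey, hl2, sq_nonneg K]
  · rw [hM1]
    have hb : binEnt ((1+ρ)/2) = 1 - phi ρ / Real.log 2 := by
      unfold binEnt phi
      have e : (1:ℝ) - (1+ρ)/2 = (1-ρ)/2 := by ring
      simp only [Real.logb, e, Real.log_div h1p.ne' two_ne_zero,
        Real.log_div h1m.ne' two_ne_zero]
      field_simp
      ring
    rw [hb]
    ring
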